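/- Let 𝔽 be any field, X ⊆ 𝔽ⁿ any set, and P, Q ∈ 𝔽[x₁,…,xₙ] polynomials such that the image P(X) = {P(x) : x ∈ X} is finite and does not contain 0. Then there exists a polynomial R ∈ 𝔽[x₁,…,xₙ] of total degree at most deg(Q) + deg(P)·(|P(X)|−1) such that Q(x) = R(x)·P(x) for every x ∈ X. -/

import Mathlib

lemma totalDegree_aeval_le {K : Type*} [CommRing K] {n : ℕ}
    (P : MvPolynomial (Fin n) K) (I : Polynomial K) :
    (Polynomial.aeval P I).totalDegree ≤ I.natDegree * P.totalDegree := by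
  rw [Polynomial.aeval_eq_sum_range]
  refine le_trans (MvPolynomial.totalDegree_finset_sum _ _) ?_
  apply Finset.sup_le
  intro i hi
  refine le_trans (MvPolynomial.totalDegree_smul_le _ _) ?_
  refine le_trans (MvPolynomial.totalDegree_pow _ _) ?_
  exact Nat.mul_le_mul_right _ (Nat.lt_succ_iff.mp (Finset.mem_range.mp hi))

/-- The case of a single polynomial with no zero on X: division via interpolation. -/
theorem statement13 {K : Type*} [Field K] {n : ℕ} (X : Set (Fin n → K))
    (P Q : MvPolynomial (Fin n) K)
    (hfin : ((fun x => MvPolynomial.eval x P) '' X).Finite)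
    (h0 : (0 : K) ∉ (fun x => MvPolynomial.eval x P) '' X) :
    ∃ R : MvPolynomial (Fin n) K,
      R.totalDegree ≤
        Q.totalDegree + P.totalDegree * (((fun x => MvPolynomial.eval x P) '' X).ncard - 1) ∧
      ∀ x ∈ X, MvPolynomial.eval x Q = MvPolynomial.eval x R * MvPolynomial.eval x P := by
  classical
  set s : Finset K := hfin.toFinset with hs
  have hscard : s.card = ((fun x => MvPolynomial.eval x P) '' X).ncard :=
    (Set.ncard_eq_toFinset_card _ hfin).symm
  set I : Polynomial K := Lagrange.interpolate s id (fun y => y⁻¹) with hI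
  refine ⟨Q * Polynomial.aeval P I, ?_, ?_⟩
  · refine le_trans (MvPolynomial.totalDegree_mul _ _) ?_
    refine add_le_add le_rfl ?_
    refine le_trans (totalDegree_aeval_le P I) ?_
    rw [← hscard, mul_comm]
    refine Nat.mul_le_mul_left _ ?_
    have := Lagrange.degree_interpolate_lt (s := s) (v := id) (r := fun y : K => y⁻¹)
      (Function.injective_id.injOn)
    rcases eq_or_ne I 0 with h | h
    · simp [h]
    · have := Polynomial.natDegree_lt_iff_degree_lt (n := s.card) h |>.mpr ?_
      · omega
      · exact_mod_cast this
  · intro x hx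
    have hmem : MvPolynomial.eval x P ∈ s := by
      simp [hs, Set.Finite.mem_toFinset]
      exact ⟨x, hx, rfl⟩
    have hne : MvPolynomial.eval x P ≠ 0 := by
      intro h
      exact h0 ⟨x, hx, h⟩
    have heval : Polynomial.eval (MvPolynomial.eval x P) I = (MvPolynomial.eval x P)⁻¹ := by
      have := Lagrange.eval_interpolate_at_node (fun y => y⁻¹)
        (Function.injective_id.injOn) hmem
      exact this
    have hcomp : MvPolynomial.eval x (Polynomial.aeval P I)
        = Polynomial.eval (MvPolynomial.eval x P) I := by
      have hid : ((MvPolynomial.eval x).comp (algebraMap K (MvPolynomial (Fin n) K)))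
          = RingHom.id K := by ext a; simp
      rw [Polynomial.aeval_def, Polynomial.hom_eval₂, hid]
      rfl
    rw [map_mul, hcomp, heval, mul_assoc, inv_mul_cancel₀ hne, mul_one]
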